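/- Let P and N be finite measures on ℝ concentrated on the interval (0,1] (i.e. P((0,1]ᶜ) = N((0,1]ᶜ) = 0), let θ₀ ∈ ℝ, and define θ : [0,1] → ℝ by θ(t) = θ₀ + P((0,t]) − N((0,t]), so θ(0) = θ₀. Suppose t* ∈ [0,1] satisfies θ(t*) ≥ θ(t) for all t ∈ [0,1]. Then: (i) for every antitone function ρ : ℝ → ℝ with 0 ≤ ρ(s) ≤ 1 for all s, one has ∫ ρ dP − ∫ ρ dN ≤ θ(t*) − θ₀; and (ii) the indicator function of (−∞, t*] attains equality: ∫ 1_{(−∞,t*]} dP − ∫ 1_{(−∞,t*]} dN = θ(t*) − θ₀. Consequently the supremum of ∫ ρ dP − ∫ ρ dN over all antitone ρ : ℝ → [0,1] equals θ(t*) − θ₀ and is attained by an indicator function. -/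

import Mathlib

open MeasureTheory Filter Topology

lemma key_lowerSet
    (P N : Measure ℝ) [IsFiniteMeasure P] [IsFiniteMeasure N]
    (hP : P ((Set.Ioc (0:ℝ) 1)ᶜ) = 0) (hN : N ((Set.Ioc (0:ℝ) 1)ᶜ) = 0)
    (θ₀ : ℝ) (θ : ℝ → ℝ)
    (hθ : ∀ t : ℝ, θ t = θ₀ + (P (Set.Ioc 0 t)).toReal - (N (Set.Ioc 0 t)).toReal)
    (tstar : ℝ) (htstar : tstar ∈ Set.Icc (0:ℝ) 1)
    (hmax : ∀ t ∈ Set.Icc (0:ℝ) 1, θ t ≤ θ tstar)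
    (S : Set ℝ) (hS : IsLowerSet S) :
    (P S).toReal - (N S).toReal ≤ θ tstar - θ₀ := by
  have hθ0 : θ 0 = θ₀ := by simp [hθ 0]
  have hbase : θ₀ ≤ θ tstar := hθ0 ▸ hmax 0 ⟨le_refl 0, zero_le_one⟩
  have hPS : P (S ∩ Set.Ioc 0 1) = P S := measure_inter_conull hP
  have hNS : N (S ∩ Set.Ioc 0 1) = N S := measure_inter_conull hN
  set A : Set ℝ := insert 0 (S ∩ Set.Icc (0:ℝ) 1) with hA
  have hAne : A.Nonempty := ⟨0, Set.mem_insert _ _⟩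
  have hAbdd : BddAbove A := by
    refine ⟨1, ?_⟩
    rintro x (rfl | ⟨-, -, hx2⟩)
    · exact zero_le_one
    · exact hx2
  set c : ℝ := sSup A with hc
  have hc0 : 0 ≤ c := le_csSup hAbdd (Set.mem_insert _ _)
  have hc1 : c ≤ 1 := by
    refine csSup_le hAne ?_
    rintro x (rfl | ⟨-, -, hx2⟩)
    · exact zero_le_one
    · exact hx2
  have hmemle : ∀ x ∈ S, 0 < x → x ≤ 1 → x ≤ c := fun x hx hx0 hx1 =>
    le_csSup hAbdd (Set.mem_insert_of_mem _ ⟨hx, le_of_lt hx0, hx1⟩)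
  by_cases hcS : c ∈ S
  · have hEq : S ∩ Set.Ioc 0 1 = Set.Ioc 0 c := by
      ext x
      constructor
      · rintro ⟨hxS, hx0, hx1⟩
        exact ⟨hx0, hmemle x hxS hx0 hx1⟩
      · rintro ⟨hx0, hxc⟩
        exact ⟨hS hxc hcS, hx0, hxc.trans hc1⟩
    rw [← hPS, ← hNS, hEq]
    have := hmax c ⟨hc0, hc1⟩
    rw [hθ c] at this
    linarith
  · have hEq : S ∩ Set.Ioc 0 1 = Set.Ioo 0 c := by
      ext x
      constructor
      · rintro ⟨hxS, hx0, hx1⟩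
        exact ⟨hx0, lt_of_le_of_ne (hmemle x hxS hx0 hx1) (fun h => hcS (h ▸ hxS))⟩
      · rintro ⟨hx0, hxc⟩
        obtain ⟨y, hyA, hxy⟩ := exists_lt_of_lt_csSup hAne hxc
        have hyS : y ∈ S := by
          rcases hyA with rfl | ⟨hyS, -⟩
          · linarith
          · exact hyS
        exact ⟨hS hxy.le hyS, hx0, hxc.le.trans hc1⟩
    rw [← hPS, ← hNS, hEq]
    rcases eq_or_lt_of_le hc0 with hceq | hcpos
    · rw [← hceq]
      simp
      linarith
    · -- approximate Ioo 0 c from below by Ioc 0 (u n)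
      set u : ℕ → ℝ := fun n => c - c / (n + 2) with hu
      have hun_lt : ∀ n, u n < c := fun n => by
        have : 0 < c / (n + 2) := div_pos hcpos (by positivity)
        simp only [hu]; linarith
      have hun_pos : ∀ n, 0 < u n := fun n => by
        have h2 : (0:ℝ) < (n:ℝ) + 2 := by positivity
        have : c / ((n:ℝ) + 2) ≤ c / 2 := by
          apply div_le_div_of_nonneg_left hcpos.le (by norm_num)
          have : (0:ℝ) ≤ (n:ℝ) := Nat.cast_nonneg n
          linarith
        have : c / 2 < c := by linarith
        simp only [hu]
        linarith [div_le_div_of_nonneg_left hcpos.le (show (0:ℝ) < 2 by norm_num)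
          (show (2:ℝ) ≤ (n:ℝ)+2 by linarith [Nat.cast_nonneg (α := ℝ) n])]
      have hu_mono : Monotone fun n : ℕ => Set.Ioc (0:ℝ) (u n) := by
        intro m n hmn
        apply Set.Ioc_subset_Ioc_right
        simp only [hu]
        have h2m : (0:ℝ) < (m:ℝ) + 2 := by positivity
        have hle : c / ((n:ℝ) + 2) ≤ c / ((m:ℝ) + 2) := by
          apply div_le_div_of_nonneg_left hcpos.le h2m
          have := (Nat.cast_le (α := ℝ)).mpr hmn
          linarith
        linarith
      have hUnion : ⋃ n, Set.Ioc (0:ℝ) (u n) = Set.Ioo 0 c := by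
        ext x
        simp only [Set.mem_iUnion, Set.mem_Ioc, Set.mem_Ioo]
        constructor
        · rintro ⟨n, hx0, hxu⟩
          exact ⟨hx0, hxu.trans_lt (hun_lt n)⟩
        · rintro ⟨hx0, hxc⟩
          have hcx : 0 < c - x := by linarith
          obtain ⟨n, hn⟩ := exists_nat_gt (c / (c - x))
          refine ⟨n, hx0, ?_⟩
          have h2 : (0:ℝ) < (n:ℝ) + 2 := by positivity
          have hn2 : c / (c - x) < (n:ℝ) + 2 := by linarith
          have : c < ((n:ℝ) + 2) * (c - x) := (div_lt_iff₀ hcx).mp hn2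
          have : c / ((n:ℝ) + 2) ≤ c - x := by
            rw [div_le_iff₀ h2]; linarith [mul_comm ((n:ℝ)+2) (c-x)]
          simp only [hu]; linarith
      have hPt : Tendsto (fun n => (P (Set.Ioc 0 (u n))).toReal) atTop
          (𝓝 ((P (Set.Ioo 0 c)).toReal)) := by
        have := tendsto_measure_iUnion_atTop (μ := P) hu_mono
        rw [hUnion] at this
        exact (ENNReal.tendsto_toReal (measure_ne_top P _)).comp this
      have hNt : Tendsto (fun n => (N (Set.Ioc 0 (u n))).toReal) atTop
          (𝓝 ((N (Set.Ioo 0 c)).toReal)) := by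
        have := tendsto_measure_iUnion_atTop (μ := N) hu_mono
        rw [hUnion] at this
        exact (ENNReal.tendsto_toReal (measure_ne_top N _)).comp this
      refine le_of_tendsto (hPt.sub hNt) (Eventually.of_forall fun n => ?_)
      have := hmax (u n) ⟨(hun_pos n).le, (hun_lt n).le.trans hc1⟩
      rw [hθ (u n)] at this
      linarith

/-- Variational lemma: for `θ(t) = θ₀ + P((0,t]) − N((0,t])` with `P, N`
finite measures concentrated on `(0,1]`, and `t*` a maximizer of `θ` over `[0,1]`, every
antitone `ρ : ℝ → [0,1]` satisfies `∫ρ dP − ∫ρ dN ≤ θ(t*) − θ₀`, the indicator of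
`(−∞, t*]` attains equality, and hence the supremum over all such `ρ` equals `θ(t*) − θ₀`. -/
theorem stmt_8
    (P N : Measure ℝ) [IsFiniteMeasure P] [IsFiniteMeasure N]
    (hP : P ((Set.Ioc (0:ℝ) 1)ᶜ) = 0) (hN : N ((Set.Ioc (0:ℝ) 1)ᶜ) = 0)
    (θ₀ : ℝ) (θ : ℝ → ℝ)
    (hθ : ∀ t : ℝ, θ t = θ₀ + (P (Set.Ioc 0 t)).toReal - (N (Set.Ioc 0 t)).toReal)
    (tstar : ℝ) (htstar : tstar ∈ Set.Icc (0:ℝ) 1)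
    (hmax : ∀ t ∈ Set.Icc (0:ℝ) 1, θ t ≤ θ tstar) :
    (∀ ρ : ℝ → ℝ, Antitone ρ → (∀ s, ρ s ∈ Set.Icc (0:ℝ) 1) →
      ∫ s, ρ s ∂P - ∫ s, ρ s ∂N ≤ θ tstar - θ₀) ∧
    (∫ s, Set.indicator (Set.Iic tstar) (fun _ => (1:ℝ)) s ∂P -
      ∫ s, Set.indicator (Set.Iic tstar) (fun _ => (1:ℝ)) s ∂N = θ tstar - θ₀) ∧
    sSup {v : ℝ | ∃ ρ : ℝ → ℝ, Antitone ρ ∧ (∀ s, ρ s ∈ Set.Icc (0:ℝ) 1) ∧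
      v = ∫ s, ρ s ∂P - ∫ s, ρ s ∂N} = θ tstar - θ₀ := by
  -- Part (i)
  have part1 : ∀ ρ : ℝ → ℝ, Antitone ρ → (∀ s, ρ s ∈ Set.Icc (0:ℝ) 1) →
      ∫ s, ρ s ∂P - ∫ s, ρ s ∂N ≤ θ tstar - θ₀ := by
    intro ρ hρ hbd
    have hmeas : Measurable ρ := hρ.measurable
    have hnormbd : ∀ s, ‖ρ s‖ ≤ 1 := fun s => by
      rw [Real.norm_eq_abs, abs_le]; exact ⟨by linarith [(hbd s).1], (hbd s).2⟩
    have hintP : Integrable ρ P :=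
      (integrable_const 1).mono' hmeas.aestronglyMeasurable
        (Eventually.of_forall hnormbd)
    have hintN : Integrable ρ N :=
      (integrable_const 1).mono' hmeas.aestronglyMeasurable
        (Eventually.of_forall hnormbd)
    have hnnP : 0 ≤ᵐ[P] ρ := Eventually.of_forall fun s => (hbd s).1
    have hnnN : 0 ≤ᵐ[N] ρ := Eventually.of_forall fun s => (hbd s).1
    set F : ℝ → ℝ := fun t => (P {a | t < ρ a}).toReal with hF
    set G : ℝ → ℝ := fun t => (N {a | t < ρ a}).toReal with hG
    have layerP : ∫ s, ρ s ∂P = ∫ t in Set.Ioi (0:ℝ), F t :=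
      hintP.integral_eq_integral_meas_lt hnnP
    have layerN : ∫ s, ρ s ∂N = ∫ t in Set.Ioi (0:ℝ), G t :=
      hintN.integral_eq_integral_meas_lt hnnN
    have hFanti : Antitone F := fun a b hab =>
      ENNReal.toReal_mono (measure_ne_top P _)
        (measure_mono fun x hx => lt_of_le_of_lt hab hx)
    have hGanti : Antitone G := fun a b hab =>
      ENNReal.toReal_mono (measure_ne_top N _)
        (measure_mono fun x hx => lt_of_le_of_lt hab hx)
    have hFzero : ∀ t : ℝ, 1 < t → F t = 0 := fun t ht => by
      have : {a : ℝ | t < ρ a} = ∅ := by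
        ext a; simp only [Set.mem_setOf_eq, Set.mem_empty_iff_false, iff_false, not_lt]
        exact (hbd a).2.trans ht.le
      simp [hF, this]
    have hGzero : ∀ t : ℝ, 1 < t → G t = 0 := fun t ht => by
      have : {a : ℝ | t < ρ a} = ∅ := by
        ext a; simp only [Set.mem_setOf_eq, Set.mem_empty_iff_false, iff_false, not_lt]
        exact (hbd a).2.trans ht.le
      simp [hG, this]
    -- restrict to Ioc 0 1
    have hrestrict : ∀ (H : ℝ → ℝ), (∀ t : ℝ, 1 < t → H t = 0) →
        ∫ t in Set.Ioi (0:ℝ), H t = ∫ t in Set.Ioc (0:ℝ) 1, H t := by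
      intro H hH
      have h1 : ∫ t in Set.Ioi (0:ℝ), H t
          = ∫ t in Set.Ioi (0:ℝ), Set.indicator (Set.Ioc (0:ℝ) 1) H t := by
        apply setIntegral_congr_fun measurableSet_Ioi
        intro t ht
        by_cases h : t ∈ Set.Ioc (0:ℝ) 1
        · rw [Set.indicator_of_mem h]
        · rw [Set.indicator_of_notMem h, hH t]
          simp only [Set.mem_Ioc, not_and, not_le] at h
          exact h ht
      rw [h1, setIntegral_indicator measurableSet_Ioc]
      have hss : Set.Ioi (0:ℝ) ∩ Set.Ioc 0 1 = Set.Ioc 0 1 := by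
        ext x
        simp only [Set.mem_inter_iff, Set.mem_Ioi, Set.mem_Ioc]
        tauto
      rw [hss]
    have hFint : IntegrableOn F (Set.Ioc (0:ℝ) 1) :=
      ((integrableOn_const_iff (C := (P Set.univ).toReal)).mpr (Or.inr (by simp))).mono'
        hFanti.measurable.aestronglyMeasurable
        (Eventually.of_forall fun t => by
          rw [Real.norm_eq_abs, abs_of_nonneg ENNReal.toReal_nonneg]
          exact ENNReal.toReal_mono (measure_ne_top P _) (measure_mono (Set.subset_univ _)))
    have hGint : IntegrableOn G (Set.Ioc (0:ℝ) 1) :=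
      ((integrableOn_const_iff (C := (N Set.univ).toReal)).mpr (Or.inr (by simp))).mono'
        hGanti.measurable.aestronglyMeasurable
        (Eventually.of_forall fun t => by
          rw [Real.norm_eq_abs, abs_of_nonneg ENNReal.toReal_nonneg]
          exact ENNReal.toReal_mono (measure_ne_top N _) (measure_mono (Set.subset_univ _)))
    have hkey : ∀ t ∈ Set.Ioc (0:ℝ) 1, F t ≤ G t + (θ tstar - θ₀) := by
      intro t _
      have hlow : IsLowerSet {a : ℝ | t < ρ a} := fun x y hyx hx =>
        lt_of_lt_of_le hx (hρ hyx)
      have := key_lowerSet P N hP hN θ₀ θ hθ tstar htstar hmax _ hlow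
      linarith
    have hmono : ∫ t in Set.Ioc (0:ℝ) 1, F t
        ≤ ∫ t in Set.Ioc (0:ℝ) 1, (G t + (θ tstar - θ₀)) :=
      setIntegral_mono_on hFint (hGint.add ((integrableOn_const_iff (C := θ tstar - θ₀)).mpr (Or.inr (by simp))))
        measurableSet_Ioc hkey
    have hsplit : ∫ t in Set.Ioc (0:ℝ) 1, (G t + (θ tstar - θ₀))
        = (∫ t in Set.Ioc (0:ℝ) 1, G t) + (θ tstar - θ₀) := by
      rw [integral_add hGint ((integrableOn_const_iff (C := θ tstar - θ₀)).mpr (Or.inr (by simp))),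
        setIntegral_const]
      simp [Real.volume_Ioc]
    rw [layerP, layerN, hrestrict F hFzero, hrestrict G hGzero]
    rw [hsplit] at hmono
    linarith
  -- Part (ii)
  have hIicP : P (Set.Iic tstar) = P (Set.Ioc 0 tstar) := by
    rw [← measure_inter_conull (s := Set.Iic tstar) hP]
    congr 1
    ext x
    simp only [Set.mem_inter_iff, Set.mem_Iic, Set.mem_Ioc]
    exact ⟨fun ⟨h1, h2, _⟩ => ⟨h2, h1⟩, fun ⟨h2, h1⟩ => ⟨h1, h2, h1.trans htstar.2⟩⟩
  have hIicN : N (Set.Iic tstar) = N (Set.Ioc 0 tstar) := by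
    rw [← measure_inter_conull (s := Set.Iic tstar) hN]
    congr 1
    ext x
    simp only [Set.mem_inter_iff, Set.mem_Iic, Set.mem_Ioc]
    exact ⟨fun ⟨h1, h2, _⟩ => ⟨h2, h1⟩, fun ⟨h2, h1⟩ => ⟨h1, h2, h1.trans htstar.2⟩⟩
  have part2 : ∫ s, Set.indicator (Set.Iic tstar) (fun _ => (1:ℝ)) s ∂P -
      ∫ s, Set.indicator (Set.Iic tstar) (fun _ => (1:ℝ)) s ∂N = θ tstar - θ₀ := by
    rw [integral_indicator_const (1:ℝ) measurableSet_Iic,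
      integral_indicator_const (1:ℝ) measurableSet_Iic, measureReal_def, measureReal_def, hIicP, hIicN, hθ tstar]
    simp only [smul_eq_mul, mul_one]
    ring
  refine ⟨part1, part2, ?_⟩
  -- Part (iii)
  have hanti_ind : Antitone (Set.indicator (Set.Iic tstar) (fun _ => (1:ℝ))) := by
    intro a b hab
    by_cases hb : b ∈ Set.Iic tstar
    · have ha : a ∈ Set.Iic tstar := le_trans hab hb
      rw [Set.indicator_of_mem hb, Set.indicator_of_mem ha]
    · rw [Set.indicator_of_notMem hb]
      exact Set.indicator_nonneg (fun _ _ => zero_le_one) a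
  have hbd_ind : ∀ s, Set.indicator (Set.Iic tstar) (fun _ => (1:ℝ)) s ∈ Set.Icc (0:ℝ) 1 := by
    intro s
    by_cases hs : s ∈ Set.Iic tstar
    · rw [Set.indicator_of_mem hs]; exact ⟨zero_le_one, le_refl 1⟩
    · rw [Set.indicator_of_notMem hs]; exact ⟨le_refl 0, zero_le_one⟩
  have hmem : θ tstar - θ₀ ∈ {v : ℝ | ∃ ρ : ℝ → ℝ, Antitone ρ ∧
      (∀ s, ρ s ∈ Set.Icc (0:ℝ) 1) ∧ v = ∫ s, ρ s ∂P - ∫ s, ρ s ∂N} :=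
    ⟨_, hanti_ind, hbd_ind, part2.symm⟩
  refine le_antisymm ?_ ?_
  · refine csSup_le ⟨_, hmem⟩ ?_
    rintro v ⟨ρ, hρ, hbd, rfl⟩
    exact part1 ρ hρ hbd
  · refine le_csSup ⟨θ tstar - θ₀, ?_⟩ hmem
    rintro v ⟨ρ, hρ, hbd, rfl⟩
    exact part1 ρ hρ hbd
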